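/- Define L := I − (M_Po e₁ e₁ᵀ) / (e₁ᵀ M_Po e₁ + b/m), where I is the p×p identity matrix. Then: (i) M = (a/b)·L·M_Po = (a/b)·M_Po·Lᵀ; (ii) det(L) = (b/m) / (e₁ᵀ M_Po e₁ + b/m) ≠ 0, so L is invertible; and (iii) L = I − (m/a)·M e₁ e₁ᵀ. -/

import Mathlib

open Matrix Real Finset

/-- Properties of the matrix `L = I − (M_Po e₁ e₁ᵀ)/(e₁ᵀ M_Po e₁ + b/m)`:
(i) `M = (a/b)·L·M_Po = (a/b)·M_Po·Lᵀ`; (ii) `det L = (b/m)/(e₁ᵀ M_Po e₁ + b/m) ≠ 0`,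
so `L` is invertible; (iii) `L = I − (m/a)·M e₁ e₁ᵀ`. -/
theorem L_matrix_properties
    (a b m : ℝ) (ha : 0 < a) (hb : 0 < b) (hm : 0 < m)
    (p : ℕ) (hp : 1 ≤ p)
    (e1 : Fin p → ℝ) (he1 : e1 = fun i : Fin p => if (i : ℕ) = 0 then (1:ℝ) else 0)
    (MPo : Matrix (Fin p) (Fin p) ℝ) (hMPo : MPo.PosSemidef)
    (M : Matrix (Fin p) (Fin p) ℝ)
    (hM : M = (a / b) • (MPo -
      (e1 ⬝ᵥ (MPo *ᵥ e1) + b / m)⁻¹ •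
        (MPo * Matrix.vecMulVec e1 e1 * MPo)))
    (L : Matrix (Fin p) (Fin p) ℝ)
    (hL : L = 1 - (e1 ⬝ᵥ (MPo *ᵥ e1) + b / m)⁻¹ • (MPo * Matrix.vecMulVec e1 e1)) :
    M = (a / b) • (L * MPo) ∧
    M = (a / b) • (MPo * Lᵀ) ∧
    L.det = (b / m) / (e1 ⬝ᵥ (MPo *ᵥ e1) + b / m) ∧
    L.det ≠ 0 ∧ IsUnit L ∧
    L = 1 - (m / a) • (M * Matrix.vecMulVec e1 e1) := by
  have hmne : m ≠ 0 := ne_of_gt hm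
  have hane : a ≠ 0 := ne_of_gt ha
  have hbne : b ≠ 0 := ne_of_gt hb
  set q : ℝ := e1 ⬝ᵥ (MPo *ᵥ e1) with hq
  set c : ℝ := q + b / m with hcdef
  set E : Matrix (Fin p) (Fin p) ℝ := Matrix.vecMulVec e1 e1 with hE
  have hq0 : 0 ≤ q := by
    have := hMPo.dotProduct_mulVec_nonneg e1
    simpa [hq] using this
  have hc0 : 0 < c := by
    have : 0 < b / m := div_pos hb hm
    simp [hcdef]; linarith
  have hcne : c ≠ 0 := ne_of_gt hc0
  -- E as col * row
  have hEcr : E = Matrix.replicateCol Unit e1 * Matrix.replicateRow Unit e1 := Matrix.vecMulVec_eq Unit e1 e1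
  -- E symmetric
  have hEsymm : Eᵀ = E := by
    ext i j; simp [hE, Matrix.vecMulVec_apply, mul_comm]
  have hMPosymm : MPoᵀ = MPo := by
    have := hMPo.1
    simpa [Matrix.IsHermitian, Matrix.conjTranspose_eq_transpose_of_trivial] using this
  -- E * MPo * E = q • E
  have hEME : E * MPo * E = q • E := by
    rw [hEcr]
    have h1 : Matrix.replicateRow Unit e1 * MPo = Matrix.replicateRow Unit (e1 ᵥ* MPo) :=
      (Matrix.replicateRow_vecMul MPo e1).symm
    have h2 : Matrix.replicateRow Unit (e1 ᵥ* MPo) * Matrix.replicateCol Unit e1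
        = ((e1 ᵥ* MPo) ⬝ᵥ e1) • (1 : Matrix Unit Unit ℝ) := by
      rw [Matrix.replicateRow_mul_replicateCol]
      ext i j
      simp [Matrix.one_apply, Subsingleton.elim i j]
    have h3 : (e1 ᵥ* MPo) ⬝ᵥ e1 = q := by
      rw [hq, Matrix.dotProduct_mulVec]
    calc Matrix.replicateCol Unit e1 * Matrix.replicateRow Unit e1 * MPo *
          (Matrix.replicateCol Unit e1 * Matrix.replicateRow Unit e1)
        = Matrix.replicateCol Unit e1 * ((Matrix.replicateRow Unit e1 * MPo * Matrix.replicateCol Unit e1) *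
            Matrix.replicateRow Unit e1) := by
          simp only [Matrix.mul_assoc]
      _ = Matrix.replicateCol Unit e1 * ((q • (1 : Matrix Unit Unit ℝ)) * Matrix.replicateRow Unit e1) := by
          rw [h1, h2, h3]
      _ = q • (Matrix.replicateCol Unit e1 * Matrix.replicateRow Unit e1) := by
          rw [Matrix.smul_mul, Matrix.one_mul, Matrix.mul_smul]
  -- (i) first identity
  have hi1 : M = (a / b) • (L * MPo) := by
    rw [hM, hL]
    congr 1
    rw [Matrix.sub_mul, Matrix.one_mul, Matrix.smul_mul, Matrix.mul_assoc]
  -- (i) second identity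
  have hLT : Lᵀ = 1 - c⁻¹ • (E * MPo) := by
    rw [hL]
    rw [Matrix.transpose_sub, Matrix.transpose_one, Matrix.transpose_smul,
      Matrix.transpose_mul, hEsymm, hMPosymm]
  have hi2 : M = (a / b) • (MPo * Lᵀ) := by
    rw [hM, hLT]
    congr 1
    rw [Matrix.mul_sub, Matrix.mul_one, Matrix.mul_smul, Matrix.mul_assoc]
  -- determinant
  have hMPoE : MPo * E = Matrix.replicateCol Unit (MPo *ᵥ e1) * Matrix.replicateRow Unit e1 := by
    rw [hEcr, ← Matrix.mul_assoc, ← Matrix.replicateCol_mulVec]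
  have hdet : L.det = (b / m) / c := by
    have hLrw : L = 1 + Matrix.replicateCol Unit (-(c⁻¹) • (MPo *ᵥ e1)) * Matrix.replicateRow Unit e1 := by
      rw [hL, hMPoE, Matrix.replicateCol_smul, Matrix.smul_mul]
      rw [sub_eq_add_neg, ← neg_smul]
    rw [hLrw, Matrix.det_one_add_replicateCol_mul_replicateRow]
    have : e1 ⬝ᵥ (-(c⁻¹) • (MPo *ᵥ e1)) = -(c⁻¹) * q := by
      rw [dotProduct_smul, hq]; simp [smul_eq_mul]
    rw [this, hcdef]
    rw [hcdef] at hcne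
    field_simp
    ring
  have hdetne : L.det ≠ 0 := by
    rw [hdet]
    exact div_ne_zero (ne_of_gt (div_pos hb hm)) hcne
  have hunit : IsUnit L := by
    rw [Matrix.isUnit_iff_isUnit_det]
    exact isUnit_iff_ne_zero.mpr hdetne
  -- (iii)
  have hiii : L = 1 - (m / a) • (M * E) := by
    have hME : M * E = (a / (m * c)) • (MPo * E) := by
      have h4 : MPo * E * MPo * E = q • (MPo * E) := by
        calc MPo * E * MPo * E = MPo * (E * MPo * E) := by simp [Matrix.mul_assoc]
          _ = q • (MPo * E) := by rw [hEME, Matrix.mul_smul]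
      rw [hM, Matrix.smul_mul, Matrix.sub_mul, Matrix.smul_mul, h4]
      rw [smul_smul, smul_sub, smul_smul, ← sub_smul]
      congr 1
      have h5 : c - q = b / m := by rw [hcdef]; ring
      have h6 : (1:ℝ) - c⁻¹ * q = (b / m) / c := by
        rw [inv_mul_eq_div, ← h5, sub_div, div_self hcne]
      have h7 : a / b - a / b * (c⁻¹ * q) = a / b * ((b / m) / c) := by
        rw [← h6]; ring
      rw [h7, div_div, div_mul_div_comm, mul_comm a b,
        mul_div_mul_left _ _ hbne]
    rw [hME, hL, smul_smul]
    congr 1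
    rw [div_mul_div_comm]
    rw [show m * a / (a * (m * c)) = c⁻¹ by field_simp]
  exact ⟨hi1, hi2, hdet, hdetne, hunit, hiii⟩
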